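/- In the unawareness example with X = {0,1}, uniform distribution over (x,a), p(0,0)=2/3, p(1,0)=1/3, p(0,1)=1/3, p(1,1)=2/3, and threshold t ∈ (1/2, 2/3): the optimal unconstrained classifier gives loans to (0,0) and (1,1) yielding strictly positive bank revenue and strictly positive welfare (E[c·Y | A=a] > 0) to both groups, while the optimal unaware classifier (which must satisfy c(x,0)=c(x,1)) gives no loans at all, yielding zero revenue and zero welfare to both groups. Hence Unawareness strictly harms both groups and the bank. -/
import Mathlib


/-- in the unawareness example (uniform distribution on Bool × Bool,
p(x,a) = 2/3 if x = a else 1/3, threshold t ∈ (1/2, 2/3)), the optimal unconstrained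
classifier gives loans to (0,0) and (1,1), yielding strictly positive revenue and
strictly positive welfare to both groups; any unaware classifier has revenue ≤ 0, and
any optimal unaware classifier yields zero revenue and zero welfare to both groups. -/
theorem stmt19 (ap am : ℝ) (hap : 0 < ap) (ham : 0 < am)
    (ht : 1 / 2 < am / (ap + am) ∧ am / (ap + am) < 2 / 3)
    (p : Bool × Bool → ℝ)
    (hp : p = fun z => if z.1 = z.2 then 2 / 3 else 1 / 3) :
    let t : ℝ := am / (ap + am)
    let cunc : Bool × Bool → ℝ := fun z => if t < p z then 1 else 0
    let R : (Bool × Bool → ℝ) → ℝ := fun c =>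
      ∑ z : Bool × Bool, (1 / 4 : ℝ) * c z * ((ap + am) * p z - am)
    let Wel : (Bool × Bool → ℝ) → Bool → ℝ := fun c a =>
      ∑ x : Bool, (1 / 2 : ℝ) * p (x, a) * c (x, a)
    (cunc (false, false) = 1 ∧ cunc (true, true) = 1 ∧
      cunc (true, false) = 0 ∧ cunc (false, true) = 0) ∧
    0 < R cunc ∧
    (∀ a : Bool, 0 < Wel cunc a) ∧
    (∀ c : Bool × Bool → ℝ, (∀ z, c z ∈ Set.Icc (0:ℝ) 1) →
      (∀ x, c (x, false) = c (x, true)) → R c ≤ 0) ∧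
    (∀ c : Bool × Bool → ℝ, (∀ z, c z ∈ Set.Icc (0:ℝ) 1) →
      (∀ x, c (x, false) = c (x, true)) →
      (∀ c' : Bool × Bool → ℝ, (∀ z, c' z ∈ Set.Icc (0:ℝ) 1) →
        (∀ x, c' (x, false) = c' (x, true)) → R c' ≤ R c) →
      R c = 0 ∧ ∀ a : Bool, Wel c a = 0) := by
  intro t cunc R Wel
  have hsum : 0 < ap + am := by linarith
  have ht1 : am / (ap + am) > 1 / 2 := ht.1
  have ht2 : am / (ap + am) < 2 / 3 := ht.2
  have hgt : am > (1/2) * (ap + am) := (lt_div_iff₀ hsum).mp ht1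
  have hlt : am < (2/3) * (ap + am) := (div_lt_iff₀ hsum).mp ht2
  have hamap : ap < am := by linarith
  have hc00 : cunc (false, false) = 1 := by
    simp only [cunc, hp, t]; norm_num; exact (div_lt_iff₀ hsum).mpr (by linarith)
  have hc11 : cunc (true, true) = 1 := by
    simp only [cunc, hp, t]; norm_num; exact (div_lt_iff₀ hsum).mpr (by linarith)
  have hc10 : cunc (true, false) = 0 := by
    simp only [cunc, hp, t]; norm_num; exact (le_div_iff₀ hsum).mpr (by linarith)
  have hc01 : cunc (false, true) = 0 := by
    simp only [cunc, hp, t]; norm_num; exact (le_div_iff₀ hsum).mpr (by linarith)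
  have hRexp : ∀ c : Bool × Bool → ℝ, R c =
      (1/4) * c (false,false) * ((ap+am)*(2/3) - am)
      + (1/4) * c (false,true) * ((ap+am)*(1/3) - am)
      + (1/4) * c (true,false) * ((ap+am)*(1/3) - am)
      + (1/4) * c (true,true) * ((ap+am)*(2/3) - am) := by
    intro c
    simp only [R, hp, Fintype.sum_prod_type, Fintype.sum_bool]
    norm_num; ring
  refine ⟨⟨hc00, hc11, hc10, hc01⟩, ?_, ?_, ?_, ?_⟩
  · rw [hRexp]; rw [hc00, hc11, hc10, hc01]; nlinarith
  · intro a
    simp only [Wel, hp, Fintype.sum_bool]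
    cases a <;> simp [hc00, hc11, hc10, hc01] <;> norm_num
  · intro c hc hun
    rw [hRexp, hun false, hun true]
    have h1 := (hc (false,true)).1
    have h2 := (hc (true,true)).1
    nlinarith
  · intro c hc hun hopt
    have hzero : R (fun _ => 0) = 0 := by rw [hRexp]; ring
    have hge : R c ≥ 0 := by
      have := hopt (fun _ => 0) (fun z => by constructor <;> norm_num) (fun x => rfl)
      linarith [this, hzero.le]
    have hle : R c ≤ 0 := by
      rw [hRexp, hun false, hun true]
      have h1 := (hc (false,true)).1
      have h2 := (hc (true,true)).1
      nlinarith
    have hR0 : R c = 0 := le_antisymm hle hge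
    have hexp : R c = (1/4) * (ap - am) * (c (false,true) + c (true,true)) := by
      rw [hRexp, hun false, hun true]; ring
    have h1 := (hc (false,true)).1
    have h2 := (hc (true,true)).1
    have hsum0 : c (false,true) + c (true,true) = 0 := by
      by_contra h
      have hpos : 0 < c (false,true) + c (true,true) := lt_of_le_of_ne (by linarith) (Ne.symm h)
      have : R c < 0 := by rw [hexp]; nlinarith
      linarith
    have hft : c (false,true) = 0 := by linarith
    have htt : c (true,true) = 0 := by linarith
    have hff : c (false,false) = 0 := by rw [hun false]; exact hft
    have htf : c (true,false) = 0 := by rw [hun true]; exact htt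
    refine ⟨hR0, ?_⟩
    intro a
    simp only [Wel, Fintype.sum_bool]
    cases a <;> simp [hff, htf, hft, htt]
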